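/- Let γ : [a,b] → ℝ³ be a rectifiable curve with range Γ and length L. Then for every ε > 0 the Lebesgue outer measure of Γ + Γ in ℝ³ satisfies μ₃*(Γ + Γ) ≤ 64 ε (L + ε)². -/

import Mathlib

open Set MeasureTheory Pointwise

private theorem ball_vol_aux (z : EuclideanSpace ℝ (Fin 3)) (ε : ℝ) (hε : 0 < ε) :
    volume (Metric.closedBall z (2*ε)) ≤ ENNReal.ofReal (64 * ε ^ 3) := by
  rw [EuclideanSpace.volume_closedBall]
  simp only [Fintype.card_fin]
  have h2ε : (0:ℝ) ≤ 2*ε := by positivity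
  have hsq : Real.sqrt Real.pi > 0 := Real.sqrt_pos.mpr Real.pi_pos
  have hΓ : Real.Gamma ((3 : ℕ) / 2 + 1) = (3/4) * Real.sqrt Real.pi := by
    have h1 : (((3:ℕ) : ℝ) / 2 + 1) = (3/2 : ℝ) + 1 := by norm_num
    rw [h1, Real.Gamma_add_one (by norm_num)]
    have h2 : (3/2 : ℝ) = (1/2 : ℝ) + 1 := by norm_num
    rw [h2, Real.Gamma_add_one (by norm_num), Real.Gamma_one_half_eq]
    ring
  rw [hΓ, ← ENNReal.ofReal_pow h2ε, ← ENNReal.ofReal_mul (by positivity)]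
  apply ENNReal.ofReal_le_ofReal
  have hc : Real.sqrt Real.pi ^ 3 / ((3/4) * Real.sqrt Real.pi) = (4/3) * Real.pi := by
    have : Real.sqrt Real.pi ^ 3 = Real.pi * Real.sqrt Real.pi := by
      rw [pow_succ, Real.sq_sqrt Real.pi_pos.le]
    rw [this]; field_simp
  rw [hc]
  have hπ : Real.pi ≤ 4 := Real.pi_le_four
  nlinarith [pow_pos hε 3, hε.le, sq_nonneg ε]

/-- If `γ : [a,b] → ℝ³` is a rectifiable curve with range `Γ` and length `L`, then for
every `ε > 0` the Lebesgue outer measure of `Γ + Γ` satisfies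
`μ₃*(Γ + Γ) ≤ 64 ε (L + ε)²`. -/
theorem stmt_13 (a b : ℝ) (γ : ℝ → EuclideanSpace ℝ (Fin 3))
    (hcont : ContinuousOn γ (Set.Icc a b))
    (hrect : BoundedVariationOn γ (Set.Icc a b))
    (L : ℝ) (hL : L = (eVariationOn γ (Set.Icc a b)).toReal)
    (Γ : Set (EuclideanSpace ℝ (Fin 3))) (hΓ : Γ = γ '' Set.Icc a b)
    (ε : ℝ) (hε : 0 < ε) :
    volume (Γ + Γ) ≤ ENNReal.ofReal (64 * ε * (L + ε) ^ 2) := by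
  subst hΓ
  rcases le_or_gt a b with hab | hab
  swap
  · rw [Set.Icc_eq_empty hab.not_ge]
    simp
  have hL0 : 0 ≤ L := hL ▸ ENNReal.toReal_nonneg
  have hloc : LocallyBoundedVariationOn γ (Set.Icc a b) :=
    hrect.locallyBoundedVariationOn
  have ha : a ∈ Set.Icc a b := ⟨le_rfl, hab⟩
  set φ : ℝ → ℝ := fun t => variationOnFromTo γ (Set.Icc a b) a t with hφdef
  -- basic bounds on φ
  have hφ0 : ∀ t ∈ Set.Icc a b, 0 ≤ φ t := fun t ht =>
    variationOnFromTo.nonneg_of_le γ _ ht.1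
  have hφL : ∀ t ∈ Set.Icc a b, φ t ≤ L := by
    intro t ht
    rw [hφdef]
    simp only
    rw [variationOnFromTo.eq_of_le γ _ ht.1, hL]
    exact ENNReal.toReal_mono hrect (eVariationOn.mono γ Set.inter_subset_left)
  -- distance bound via variation
  have hdist : ∀ s ∈ Set.Icc a b, ∀ t ∈ Set.Icc a b,
      dist (γ s) (γ t) ≤ |φ t - φ s| := by
    have key : ∀ s ∈ Set.Icc a b, ∀ t ∈ Set.Icc a b, s ≤ t →
        dist (γ s) (γ t) ≤ φ t - φ s := by
      intro s hs t ht hst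
      have h1 : dist (γ s) (γ t)
          ≤ (eVariationOn γ (Set.Icc a b ∩ Set.Icc s t)).toReal := by
        rw [dist_edist]
        exact ENNReal.toReal_mono (hloc s t hs ht)
          (eVariationOn.edist_le γ ⟨hs, le_rfl, hst⟩ ⟨ht, hst, le_rfl⟩)
      have h2 : (eVariationOn γ (Set.Icc a b ∩ Set.Icc s t)).toReal
          = φ t - φ s := by
        rw [← variationOnFromTo.eq_of_le γ _ hst]
        have := variationOnFromTo.add hloc ha hs ht
        simp only [hφdef]
        linarith
      linarith [h1, h2 ▸ h1]
    intro s hs t ht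
    rcases le_total s t with hst | hts
    · exact (key s hs t ht hst).trans (le_abs_self _)
    · rw [dist_comm, abs_sub_comm]
      exact (key t ht s hs hts).trans (le_abs_self _)
  set n : ℕ := ⌊L / ε⌋₊ + 1 with hn
  have hnε : (n : ℝ) * ε ≤ L + ε := by
    have h1 : (⌊L / ε⌋₊ : ℝ) ≤ L / ε := Nat.floor_le (div_nonneg hL0 hε.le)
    have h2 : (n : ℝ) ≤ L / ε + 1 := by rw [hn]; push_cast; linarith
    have := mul_le_mul_of_nonneg_right h2 hε.le
    rwa [add_mul, div_mul_cancel₀ _ hε.ne', one_mul] at this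
  -- the pieces
  set T : ℕ → Set ℝ := fun i =>
    {t | t ∈ Set.Icc a b ∧ (i : ℝ) * ε ≤ φ t ∧ φ t < ((i : ℝ) + 1) * ε} with hT
  have hmem : ∀ t ∈ Set.Icc a b, ∃ i < n, t ∈ T i := by
    intro t ht
    refine ⟨⌊φ t / ε⌋₊, ?_, ht, ?_, ?_⟩
    · have : ⌊φ t / ε⌋₊ ≤ ⌊L / ε⌋₊ :=
        Nat.floor_le_floor (by gcongr; exact hφL t ht)
      omega
    · have h1 : (⌊φ t / ε⌋₊ : ℝ) ≤ φ t / ε :=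
        Nat.floor_le (div_nonneg (hφ0 t ht) hε.le)
      calc (⌊φ t / ε⌋₊ : ℝ) * ε ≤ (φ t / ε) * ε := by gcongr
        _ = φ t := div_mul_cancel₀ _ hε.ne'
    · have h1 : φ t / ε < ⌊φ t / ε⌋₊ + 1 := Nat.lt_floor_add_one _
      have := mul_lt_mul_of_pos_right h1 hε
      rwa [div_mul_cancel₀ _ hε.ne'] at this
  -- covering inclusion
  have hsub : γ '' Set.Icc a b + γ '' Set.Icc a b ⊆
      ⋃ i ∈ Finset.range n, ⋃ j ∈ Finset.range n, (γ '' T i + γ '' T j) := by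
    rintro x ⟨u, ⟨s, hs, rfl⟩, v, ⟨t, ht, rfl⟩, rfl⟩
    obtain ⟨i, hi, hsT⟩ := hmem s hs
    obtain ⟨j, hj, htT⟩ := hmem t ht
    refine Set.mem_iUnion₂.mpr ⟨i, Finset.mem_range.mpr hi,
      Set.mem_iUnion₂.mpr ⟨j, Finset.mem_range.mpr hj, ?_⟩⟩
    exact ⟨γ s, ⟨s, hsT, rfl⟩, γ t, ⟨t, htT, rfl⟩, rfl⟩
  -- per-pair volume bound
  have hpair : ∀ i j : ℕ, volume (γ '' T i + γ '' T j)
      ≤ ENNReal.ofReal (64 * ε ^ 3) := by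
    intro i j
    rcases Set.eq_empty_or_nonempty (γ '' T i + γ '' T j) with h | ⟨z, hz⟩
    · rw [h]; simp
    obtain ⟨u, ⟨s₀, hs₀, rfl⟩, v, ⟨t₀, ht₀, rfl⟩, rfl⟩ := hz
    have hball : γ '' T i + γ '' T j ⊆ Metric.closedBall (γ s₀ + γ t₀) (2 * ε) := by
      rintro x ⟨u, ⟨s, hs, rfl⟩, v, ⟨t, ht, rfl⟩, rfl⟩
      rw [Metric.mem_closedBall]
      have h1 : dist (γ s) (γ s₀) ≤ ε := by
        refine (hdist s hs.1 s₀ hs₀.1).trans ?_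
        rw [abs_le]
        constructor <;> [linarith [hs.2.1, hs.2.2, hs₀.2.1, hs₀.2.2];
          linarith [hs.2.1, hs.2.2, hs₀.2.1, hs₀.2.2]]
      have h2 : dist (γ t) (γ t₀) ≤ ε := by
        refine (hdist t ht.1 t₀ ht₀.1).trans ?_
        rw [abs_le]
        constructor <;> [linarith [ht.2.1, ht.2.2, ht₀.2.1, ht₀.2.2];
          linarith [ht.2.1, ht.2.2, ht₀.2.1, ht₀.2.2]]
      calc dist (γ s + γ t) (γ s₀ + γ t₀) ≤ dist (γ s) (γ s₀) + dist (γ t) (γ t₀) :=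
            dist_add_add_le _ _ _ _
        _ ≤ 2 * ε := by linarith
    exact (measure_mono hball).trans (ball_vol_aux _ ε hε)
  -- put it together
  calc volume (γ '' Set.Icc a b + γ '' Set.Icc a b)
      ≤ volume (⋃ i ∈ Finset.range n, ⋃ j ∈ Finset.range n, (γ '' T i + γ '' T j)) :=
        measure_mono hsub
    _ ≤ ∑ i ∈ Finset.range n, volume (⋃ j ∈ Finset.range n, (γ '' T i + γ '' T j)) :=
        measure_biUnion_finset_le _ _
    _ ≤ ∑ i ∈ Finset.range n, ∑ j ∈ Finset.range n, volume (γ '' T i + γ '' T j) :=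
        Finset.sum_le_sum fun i _ => measure_biUnion_finset_le _ _
    _ ≤ ∑ _i ∈ Finset.range n, ∑ _j ∈ Finset.range n, ENNReal.ofReal (64 * ε ^ 3) :=
        Finset.sum_le_sum fun i _ => Finset.sum_le_sum fun j _ => hpair i j
    _ = (n : ENNReal) * ((n : ENNReal) * ENNReal.ofReal (64 * ε ^ 3)) := by
        simp [Finset.sum_const, nsmul_eq_mul, mul_assoc]
    _ ≤ ENNReal.ofReal (64 * ε * (L + ε) ^ 2) := by
        rw [← ENNReal.ofReal_natCast n, ← ENNReal.ofReal_mul (by positivity),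
          ← ENNReal.ofReal_mul (by positivity)]
        apply ENNReal.ofReal_le_ofReal
        have hnn : (0:ℝ) ≤ (n : ℝ) := Nat.cast_nonneg n
        have hsq : ((n:ℝ) * ε) * ((n:ℝ) * ε) ≤ (L + ε) * (L + ε) :=
          mul_le_mul hnε hnε (by positivity) (by linarith)
        nlinarith [hε.le, hsq]
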